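/- The Knizhnik–Zamolodchikov connection ∇f = df − (1/(k+h^∨)) Σ_{p ≠ ℓ} (z_ℓ − z_p)^{-1} Ω_{ℓp} f dz_ℓ, where Ω_{ℓp} = Σ_i g^i_{(ℓ)} g_{i,(p)} is the Casimir element acting on the ℓ-th and p-th tensor factors, is flat; equivalently, the 1-form ω = Σ_{ℓ<p} Ω_{ℓp} d log(z_ℓ − z_p) satisfies dω = 0 and ω ∧ ω = 0, which follows from the infinitesimal braid (Kohno–Drinfeld) relations [Ω_{ℓp}, Ω_{ℓq} + Ω_{pq}] = 0 and [Ω_{ℓp}, Ω_{qr}] = 0 for distinct indices. -/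

import Mathlib

open Finset

/-- Endomorphisms of the representation space `V₁ ⊗ ... ⊗ Vₙ` (realized as
`Fin d → ℂ`). -/
abbrev EndC (d : ℕ) := (Fin d → ℂ) →L[ℂ] (Fin d → ℂ)

set_option maxHeartbeats 1000000
set_option synthInstance.maxHeartbeats 400000

lemma kz_smul_lie_smul (d : ℕ) (c c' : ℂ) (x y : EndC d) :
    ⁅c • x, c' • y⁆ = (c * c') • ⁅x, y⁆ := by
  ext v
  simp [Ring.lie_def, smul_sub]
  ring_nf

lemma kz_smul_mul_sub (d : ℕ) (c c' : ℂ) (x y : EndC d) :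
    (c • x) * (c' • y) - (c' • y) * (c • x) = c • c' • ⁅x, y⁆ := by
  ext v
  simp [Ring.lie_def, smul_sub]
  ring_nf

lemma kz_lie_expand (n d : ℕ) (l p : Fin n) (z : Fin n → ℂ) (Ω : Fin n → Fin n → EndC d) :
    ⁅∑ q ∈ univ \ {l}, (z l - z q)⁻¹ • Ω l q,
      ∑ r ∈ univ \ {p}, (z p - z r)⁻¹ • Ω p r⁆
      = ∑ q ∈ univ \ {l}, ∑ r ∈ univ \ {p},
          (z l - z q)⁻¹ • (z p - z r)⁻¹ • ⁅Ω l q, Ω p r⁆ := by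
  rw [Ring.lie_def, Finset.sum_mul, Finset.mul_sum, ← Finset.sum_sub_distrib]
  refine Finset.sum_congr rfl fun q _ => ?_
  rw [Finset.mul_sum, Finset.sum_mul, ← Finset.sum_sub_distrib]
  refine Finset.sum_congr rfl fun r _ => ?_
  exact kz_smul_mul_sub d _ _ _ _

lemma kz_fderiv_A (n d : ℕ) (κ : ℂ) (Ω : Fin n → Fin n → EndC d)
    (z : Fin n → ℂ) (hz : ∀ i j : Fin n, i ≠ j → z i ≠ z j)
    (a b : Fin n) (hab : a ≠ b) :
    fderiv ℂ (fun w : Fin n → ℂ => (1 / κ) • ∑ q ∈ univ \ {a}, (w a - w q)⁻¹ • Ω a q) z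
      (Pi.single b 1)
      = (1 / κ) • (((z a - z b) ^ 2)⁻¹ • Ω a b) := by
  set P : Fin n → (Fin n → ℂ) →L[ℂ] ℂ := fun i => ContinuousLinearMap.proj i with hP
  have key : ∀ q ∈ univ \ {a}, HasFDerivAt (fun w : Fin n → ℂ => (w a - w q)⁻¹ • Ω a q)
      (((-((z a - z q) ^ 2)⁻¹) • (P a - P q)).smulRight (Ω a q)) z := by
    intro q hq
    have hq' : q ≠ a := by simpa using (Finset.mem_sdiff.mp hq).2
    have h1 : HasFDerivAt (fun w : Fin n → ℂ => w a - w q) (P a - P q) z :=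
      HasFDerivAt.sub ((P a).hasFDerivAt) ((P q).hasFDerivAt)
    have hne : z a - z q ≠ 0 := sub_ne_zero.mpr (hz a q (Ne.symm hq'))
    have h2 := ((hasFDerivAt_inv hne).comp z h1).smul_const (Ω a q)
    refine h2.congr_fderiv ?_
    ext v x
    simp [mul_comm]
    ring
  have hfd : HasFDerivAt
      (fun w : Fin n → ℂ => (1 / κ) • ∑ q ∈ univ \ {a}, (w a - w q)⁻¹ • Ω a q)
      ((1 / κ) • ∑ q ∈ univ \ {a},
        ((-((z a - z q) ^ 2)⁻¹) • (P a - P q)).smulRight (Ω a q)) z :=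
    (HasFDerivAt.fun_sum key).const_smul (1 / κ)
  rw [hfd.fderiv]
  simp only [ContinuousLinearMap.smul_apply, ContinuousLinearMap.sum_apply,
    ContinuousLinearMap.smulRight_apply, ContinuousLinearMap.sub_apply, hP,
    ContinuousLinearMap.proj_apply]
  congr 1
  rw [Finset.sum_eq_single_of_mem b (by simp [Ne.symm hab])]
  · rw [Pi.single_apply, Pi.single_apply, if_neg hab, if_pos rfl]
    norm_num
  · intro q hq hqb
    rw [Pi.single_apply, Pi.single_apply, if_neg hab, if_neg hqb]
    simp

lemma kz_bracket_zero (n d : ℕ) (Ω : Fin n → Fin n → EndC d)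
    (hsymm : ∀ l p, Ω l p = Ω p l)
    (hbraid₁ : ∀ l p q, l ≠ p → l ≠ q → p ≠ q → ⁅Ω l p, Ω l q + Ω p q⁆ = 0)
    (hbraid₂ : ∀ l p q r, l ≠ p → l ≠ q → l ≠ r → p ≠ q → p ≠ r → q ≠ r →
      ⁅Ω l p, Ω q r⁆ = 0)
    (z : Fin n → ℂ) (hz : ∀ i j : Fin n, i ≠ j → z i ≠ z j)
    (l p : Fin n) (hlp : l ≠ p) :
    ⁅∑ q ∈ univ \ {l}, (z l - z q)⁻¹ • Ω l q,
      ∑ r ∈ univ \ {p}, (z p - z r)⁻¹ • Ω p r⁆ = 0 := by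
  set t : Fin n → Fin n → EndC d :=
    fun q r => (z l - z q)⁻¹ • (z p - z r)⁻¹ • ⁅Ω l q, Ω p r⁆ with ht
  have hexp := kz_lie_expand n d l p z Ω
  set S : Finset (Fin n) := univ \ {l, p} with hS
  have hpS : p ∉ S := by simp [hS]
  have hlS : l ∉ S := by simp [hS]
  have hUl : univ \ {l} = insert p S := by
    ext x
    simp only [hS, Finset.mem_sdiff, Finset.mem_univ, Finset.mem_singleton,
      Finset.mem_insert, true_and]
    constructor
    · intro hx
      by_cases h : x = p
      · exact Or.inl h
      · exact Or.inr (by push_neg; exact ⟨hx, h⟩)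
    · rintro (rfl | hx)
      · exact Ne.symm hlp
      · intro h; exact hx (Or.inl h)
  have hUp : univ \ {p} = insert l S := by
    ext x
    simp only [hS, Finset.mem_sdiff, Finset.mem_univ, Finset.mem_singleton,
      Finset.mem_insert, true_and]
    constructor
    · intro hx
      by_cases h : x = l
      · exact Or.inl h
      · exact Or.inr (by push_neg; exact ⟨h, hx⟩)
    · rintro (rfl | hx)
      · exact hlp
      · intro h; exact hx (Or.inr h)
  have hmemS : ∀ m ∈ S, m ≠ l ∧ m ≠ p := by
    intro m hm
    simp only [hS, Finset.mem_sdiff, Finset.mem_univ, Finset.mem_insert,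
      Finset.mem_singleton, true_and] at hm
    push_neg at hm
    exact hm
  have hdiag : ∀ q ∈ S, ∑ r ∈ S, t q r = t q q := by
    intro q hq
    obtain ⟨hql, hqp⟩ := hmemS q hq
    refine Finset.sum_eq_single_of_mem q hq ?_
    intro r hr hrq
    obtain ⟨hrl, hrp⟩ := hmemS r hr
    have h0 : ⁅Ω l q, Ω p r⁆ = 0 :=
      hbraid₂ l q p r (Ne.symm hql) hlp (Ne.symm hrl) hqp (Ne.symm hrq) (Ne.symm hrp)
    rw [ht]
    simp only
    rw [h0]
    module
  have htpl : t p l = 0 := by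
    have h0 : ⁅Ω l p, Ω p l⁆ = 0 := by rw [hsymm p l, Ring.lie_def, sub_self]
    rw [ht]
    simp only
    rw [h0]
    module
  have hper : ∀ m ∈ S, t m l + t p m + t m m = 0 := by
    intro m hm
    obtain ⟨hml, hmp⟩ := hmemS m hm
    have hlm : l ≠ m := Ne.symm hml
    have hpm : p ≠ m := Ne.symm hmp
    set X : EndC d := ⁅Ω l m, Ω p m⁆ with hX
    have h1 : ⁅Ω l m, Ω p l⁆ = -X := by
      have hb := hbraid₁ l m p hlm hlp hmp
      rw [Ring.lie_def, mul_add, add_mul, add_sub_add_comm, ← Ring.lie_def, ← Ring.lie_def] at hb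
      have h5 : ⁅Ω l m, Ω l p⁆ = -⁅Ω l m, Ω m p⁆ := eq_neg_of_add_eq_zero_left hb
      rw [hsymm p l, h5, hsymm m p, hX]
    have h2 : ⁅Ω l p, Ω p m⁆ = -X := by
      have hb := hbraid₁ p l m (Ne.symm hlp) hpm hlm
      rw [Ring.lie_def, mul_add, add_mul, add_sub_add_comm, ← Ring.lie_def, ← Ring.lie_def] at hb
      have h3 : ⁅Ω p l, Ω p m⁆ = -⁅Ω p l, Ω l m⁆ := eq_neg_of_add_eq_zero_left hb
      have h4 : -⁅Ω p l, Ω l m⁆ = ⁅Ω l m, Ω p l⁆ := by rw [Ring.lie_def, Ring.lie_def, neg_sub]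
      rw [hsymm l p, h3, h4, h1]
    have hcomb : t m l + t p m + t m m
        = (-((z l - z m)⁻¹ * (z p - z l)⁻¹) + -((z l - z p)⁻¹ * (z p - z m)⁻¹)
            + (z l - z m)⁻¹ * (z p - z m)⁻¹) • X := by
      rw [ht]
      simp only
      rw [h1, h2]
      rw [smul_neg, smul_neg, smul_neg, smul_neg, smul_smul, smul_smul, smul_smul]
      module
    have ha : z l - z m ≠ 0 := sub_ne_zero.mpr (hz l m hlm)
    have hb' : z p - z m ≠ 0 := sub_ne_zero.mpr (hz p m hpm)
    have hc : z l - z p ≠ 0 := sub_ne_zero.mpr (hz l p hlp)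
    have hc' : z p - z l ≠ 0 := sub_ne_zero.mpr (hz p l (Ne.symm hlp))
    have hcoef : (-((z l - z m)⁻¹ * (z p - z l)⁻¹) + -((z l - z p)⁻¹ * (z p - z m)⁻¹)
        + (z l - z m)⁻¹ * (z p - z m)⁻¹) = 0 := by
      field_simp
      ring
    rw [hcomb, hcoef]
    module
  rw [hexp]
  have step1 : ∑ q ∈ univ \ {l}, ∑ r ∈ univ \ {p}, t q r
      = ∑ q ∈ univ \ {l}, (t q l + ∑ r ∈ S, t q r) := by
    refine Finset.sum_congr rfl fun q _ => ?_
    rw [hUp, Finset.sum_insert hlS]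
  rw [show (∑ q ∈ univ \ {l}, ∑ r ∈ univ \ {p},
      (z l - z q)⁻¹ • (z p - z r)⁻¹ • ⁅Ω l q, Ω p r⁆)
      = ∑ q ∈ univ \ {l}, ∑ r ∈ univ \ {p}, t q r from rfl]
  rw [step1, Finset.sum_add_distrib, hUl, Finset.sum_insert hpS,
    Finset.sum_insert hpS, htpl]
  have step2 : ∑ q ∈ S, ∑ r ∈ S, t q r = ∑ q ∈ S, t q q :=
    Finset.sum_congr rfl hdiag
  rw [step2, zero_add]
  have step3 : ∑ q ∈ S, t q l + (∑ r ∈ S, t p r + ∑ q ∈ S, t q q)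
      = ∑ m ∈ S, (t m l + t p m + t m m) := by
    rw [Finset.sum_add_distrib, Finset.sum_add_distrib]
    abel
  rw [step3]
  exact Finset.sum_eq_zero hper

/-- Flatness of the Knizhnik–Zamolodchikov connection
`∇ f = df - (1/κ) ∑_{p ≠ ℓ} (z_ℓ - z_p)⁻¹ Ω_{ℓp} f dz_ℓ` (`κ = k + h^∨ ≠ 0`):
if the Casimir operators `Ω_{ℓp}` are symmetric in their indices and satisfy the
infinitesimal braid (Kohno–Drinfeld) relations `[Ω_{ℓp}, Ω_{ℓq} + Ω_{pq}] = 0`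
and `[Ω_{ℓp}, Ω_{qr}] = 0` for distinct indices, then the curvature of `∇`
vanishes on the configuration space `{z : z_i ≠ z_j for i ≠ j}`. -/
theorem kz_connection_flat (n d : ℕ) (κ : ℂ) (hκ : κ ≠ 0)
    (Ω : Fin n → Fin n → EndC d)
    (hsymm : ∀ l p, Ω l p = Ω p l)
    (hbraid₁ : ∀ l p q, l ≠ p → l ≠ q → p ≠ q →
      ⁅Ω l p, Ω l q + Ω p q⁆ = 0)
    (hbraid₂ : ∀ l p q r, l ≠ p → l ≠ q → l ≠ r → p ≠ q → p ≠ r → q ≠ r →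
      ⁅Ω l p, Ω q r⁆ = 0)
    (A : Fin n → (Fin n → ℂ) → EndC d)
    (hA : ∀ (l : Fin n) (z : Fin n → ℂ),
      A l z = (1 / κ) • ∑ p ∈ univ \ {l}, (z l - z p)⁻¹ • Ω l p) :
    ∀ z : Fin n → ℂ, (∀ i j : Fin n, i ≠ j → z i ≠ z j) →
      ∀ l p : Fin n,
        fderiv ℂ (A p) z (Pi.single l 1) - fderiv ℂ (A l) z (Pi.single p 1)
          + ⁅A l z, A p z⁆ = 0 := by
  intro z hz l p
  by_cases hlp : l = p
  · subst hlp
    simp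
    rw [Ring.lie_def, sub_self]
  · have hAl : A l = fun w : Fin n → ℂ =>
        (1 / κ) • ∑ q ∈ univ \ {l}, (w l - w q)⁻¹ • Ω l q := funext (hA l)
    have hAp : A p = fun w : Fin n → ℂ =>
        (1 / κ) • ∑ q ∈ univ \ {p}, (w p - w q)⁻¹ • Ω p q := funext (hA p)
    rw [hAl, hAp]
    rw [kz_fderiv_A n d κ Ω z hz p l (Ne.symm hlp), kz_fderiv_A n d κ Ω z hz l p hlp]
    have hsq : (z p - z l) ^ 2 = (z l - z p) ^ 2 := by ring
    rw [hsq, hsymm p l, sub_self, zero_add]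
    show ⁅(1 / κ) • ∑ q ∈ univ \ {l}, (z l - z q)⁻¹ • Ω l q,
        (1 / κ) • ∑ q ∈ univ \ {p}, (z p - z q)⁻¹ • Ω p q⁆ = 0
    rw [kz_smul_lie_smul, kz_bracket_zero n d Ω hsymm hbraid₁ hbraid₂ z hz l p hlp]
    module
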